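/- arXiv:1610.05071 — 2 statements merged into one kernel-verified Lean document; each statement's English description precedes it below -/
import Mathlib

section
/- Let τ > 0, let k ≥ 1 be an integer, fix t ∈ (0, τ), and let p be a real polynomial of degree at most k. Then there exists a unique polynomial p̃ of degree at most k such that p̃(0) = p(0) and ∫₀^τ p̃(s)·q(s) ds = ∫₀^t p(s)·q(s) ds for every polynomial q of degree at most k−1. -/
open Polynomial MeasureTheory intervalIntegral

private lemma poly_intervalIntegrable (f : Polynomial ℝ) (g : ℝ → ℝ) (hg : Continuous g)
    (a b : ℝ) : IntervalIntegrable (fun s => f.eval s * g s) volume a b :=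
  ((f.continuous).mul hg).intervalIntegrable a b

/-- Expand ∫ f·q as a sum over monomial integrals. -/
private lemma aux_expand (f q : Polynomial ℝ) (a : ℝ) (k : ℕ) (hq : q.natDegree < k) :
    (∫ s in (0:ℝ)..a, f.eval s * q.eval s)
      = ∑ i ∈ Finset.range k, q.coeff i * ∫ s in (0:ℝ)..a, f.eval s * s ^ i := by
  have hrw : (fun s => f.eval s * q.eval s)
      = fun s => ∑ i ∈ Finset.range k, q.coeff i * (f.eval s * s ^ i) := by
    funext s
    conv_lhs => rw [q.as_sum_range' k hq]
    simp [Polynomial.eval_finset_sum, Finset.mul_sum]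
    apply Finset.sum_congr rfl
    intro i _
    ring
  rw [hrw, intervalIntegral.integral_finset_sum]
  · exact Finset.sum_congr rfl fun i _ => intervalIntegral.integral_const_mul _ _
  · intro i _
    exact (continuous_const.mul ((f.continuous).mul (continuous_pow i))).intervalIntegrable _ _

/-- If the moment integrals agree for all monomials of degree < k, they agree
for all polynomials of degree < k. -/
private lemma aux_int (f g : Polynomial ℝ) (a b : ℝ) (k : ℕ)
    (h : ∀ j, j < k → (∫ s in (0:ℝ)..a, f.eval s * s ^ j)
        = ∫ s in (0:ℝ)..b, g.eval s * s ^ j)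
    (q : Polynomial ℝ) (hq : q.natDegree < k) :
    (∫ s in (0:ℝ)..a, f.eval s * q.eval s) = ∫ s in (0:ℝ)..b, g.eval s * q.eval s := by
  rw [aux_expand f q a k hq, aux_expand g q b k hq]
  exact Finset.sum_congr rfl fun i hi => by rw [h i (Finset.mem_range.mp hi)]

/-- The key positivity lemma: if ∫₀^τ s·r(s)² = 0 then r = 0. -/
private lemma aux_pos (τ : ℝ) (hτ : 0 < τ) (r : Polynomial ℝ)
    (h : (∫ s in (0:ℝ)..τ, (Polynomial.X * r).eval s * r.eval s) = 0) : r = 0 := by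
  by_contra hr
  set g : Polynomial ℝ := Polynomial.X * r ^ 2 with hg
  have hg0 : g ≠ 0 := mul_ne_zero Polynomial.X_ne_zero (pow_ne_zero 2 hr)
  have hint : (∫ s in (0:ℝ)..τ, g.eval s) = 0 := by
    have : (∫ s in (0:ℝ)..τ, g.eval s) = ∫ s in (0:ℝ)..τ, (Polynomial.X * r).eval s * r.eval s := by
      apply intervalIntegral.integral_congr
      intro s _
      simp only [hg, Polynomial.eval_mul, Polynomial.eval_pow, Polynomial.eval_X, sq]
      ring
    rw [this, h]
  rw [intervalIntegral.integral_of_le hτ.le] at hint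
  have hnn : 0 ≤ᵐ[volume.restrict (Set.Ioc (0:ℝ) τ)] fun s => g.eval s := by
    filter_upwards [ae_restrict_mem measurableSet_Ioc] with s hs
    simp only [hg, Polynomial.eval_mul, Polynomial.eval_pow, Polynomial.eval_X, Pi.zero_apply]
    exact mul_nonneg hs.1.le (sq_nonneg _)
  have hInt : IntegrableOn (fun s => g.eval s) (Set.Ioc (0:ℝ) τ) volume :=
    (g.continuous).integrableOn_Ioc
  have hpos : 0 < ∫ s in Set.Ioc (0:ℝ) τ, g.eval s := by
    rw [MeasureTheory.setIntegral_pos_iff_support_of_nonneg_ae hnn hInt]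
    have hsub : Set.Ioc (0:ℝ) τ \ {x | g.IsRoot x}
        ⊆ Function.support (fun s => g.eval s) ∩ Set.Ioc (0:ℝ) τ := by
      rintro x ⟨hx1, hx2⟩
      exact ⟨fun hx => hx2 hx, hx1⟩
    calc (0 : ENNReal) < volume (Set.Ioc (0:ℝ) τ \ {x | g.IsRoot x}) := by
          rw [measure_diff_null ((Polynomial.finite_setOf_isRoot hg0).measure_zero volume)]
          simpa [Real.volume_Ioc] using hτ
      _ ≤ _ := measure_mono hsub
  exact absurd hint hpos.ne'

theorem natDegree_le_of_mem_degreeLT {f : Polynomial ℝ} {k : ℕ}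
    (hf : f ∈ Polynomial.degreeLT ℝ (k + 1)) : f.natDegree ≤ k := by
  rcases eq_or_ne f 0 with rfl | h
  · simp
  · have := Polynomial.mem_degreeLT.mp hf
    exact Nat.lt_succ_iff.mp ((Polynomial.natDegree_lt_iff_degree_lt h).mpr this)

theorem mem_degreeLT_of_natDegree_le {f : Polynomial ℝ} {k : ℕ}
    (hf : f.natDegree ≤ k) : f ∈ Polynomial.degreeLT ℝ (k + 1) := by
  rw [Polynomial.mem_degreeLT]
  calc f.degree ≤ (f.natDegree : WithBot ℕ) := Polynomial.degree_le_natDegree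
    _ < ((k + 1 : ℕ) : WithBot ℕ) := by exact_mod_cast Nat.lt_succ_of_le hf

/-- Existence and uniqueness of the approximate discrete characteristic polynomial. -/
theorem stmt_6 (τ : ℝ) (hτ : 0 < τ) (k : ℕ) (hk : 1 ≤ k) (t : ℝ)
    (ht : t ∈ Set.Ioo 0 τ) (p : Polynomial ℝ) (hp : p.natDegree ≤ k) :
    ∃! pt : Polynomial ℝ, pt.natDegree ≤ k ∧ pt.eval 0 = p.eval 0 ∧
      ∀ q : Polynomial ℝ, q.natDegree ≤ k - 1 →
        ∫ s in (0:ℝ)..τ, pt.eval s * q.eval s = ∫ s in (0:ℝ)..t, p.eval s * q.eval s := by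
  -- the linear map collecting the k+1 conditions
  set V := Polynomial.degreeLT ℝ (k + 1) with hV
  have hiii : ∀ (f g : Polynomial ℝ) (j : ℕ),
      (∫ s in (0:ℝ)..τ, (f.eval s + g.eval s) * s ^ j)
        = (∫ s in (0:ℝ)..τ, f.eval s * s ^ j) + ∫ s in (0:ℝ)..τ, g.eval s * s ^ j := by
    intro f g j
    rw [← intervalIntegral.integral_add (poly_intervalIntegrable f _ (continuous_pow j) _ _)
        (poly_intervalIntegrable g _ (continuous_pow j) _ _)]
    apply intervalIntegral.integral_congr
    intro s _
    simp [add_mul]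
  have hsss : ∀ (c : ℝ) (f : Polynomial ℝ) (j : ℕ),
      (∫ s in (0:ℝ)..τ, c * f.eval s * s ^ j)
        = c * ∫ s in (0:ℝ)..τ, f.eval s * s ^ j := by
    intro c f j
    rw [← intervalIntegral.integral_const_mul]
    apply intervalIntegral.integral_congr
    intro s _
    ring
  let M : V →ₗ[ℝ] (Fin (k + 1) → ℝ) :=
  { toFun := fun f i => if (i : ℕ) = 0 then (f : Polynomial ℝ).eval 0
      else ∫ s in (0:ℝ)..τ, (f : Polynomial ℝ).eval s * s ^ ((i : ℕ) - 1),
    map_add' := by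
      intro f g
      funext i
      by_cases hi : (i : ℕ) = 0
      · simp [hi, (show i = 0 by simpa using hi)]
      · simp only [Submodule.coe_add, Polynomial.eval_add, Pi.add_apply, if_neg hi]
        exact hiii _ _ _
    map_smul' := by
      intro c f
      funext i
      by_cases hi : (i : ℕ) = 0
      · simp [hi, (show i = 0 by simpa using hi)]
      · simp only [SetLike.val_smul, Polynomial.eval_smul, smul_eq_mul, Pi.smul_apply,
          RingHom.id_apply, if_neg hi]
        exact hsss _ _ _ }
  have hMinj : Function.Injective M := by
    rw [← LinearMap.ker_eq_bot, Submodule.eq_bot_iff]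
    rintro ⟨f, hf⟩ hker
    have hker' : ∀ i : Fin (k + 1), M ⟨f, hf⟩ i = 0 := fun i => by
      rw [hker]; rfl
    have h0 : f.eval 0 = 0 := by simpa [M] using hker' 0
    have hmom : ∀ j, j < k → (∫ s in (0:ℝ)..τ, f.eval s * s ^ j) = 0 := by
      intro j hj
      have := hker' ⟨j + 1, by omega⟩
      simpa [M] using this
    -- f = X * r
    obtain ⟨r, hr⟩ : Polynomial.X ∣ f :=
      Polynomial.X_dvd_iff.mpr (by rwa [Polynomial.coeff_zero_eq_eval_zero])
    rcases eq_or_ne r 0 with rfl | hrne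
    · simp [Subtype.ext_iff, hr]
    have hfne : f ≠ 0 := by
      rw [hr]; exact mul_ne_zero Polynomial.X_ne_zero hrne
    have hdf : f.natDegree ≤ k := natDegree_le_of_mem_degreeLT hf
    have hdr : r.natDegree < k := by
      have : f.natDegree = 1 + r.natDegree := by
        rw [hr, Polynomial.natDegree_mul Polynomial.X_ne_zero hrne, Polynomial.natDegree_X]
      omega
    have hzero : (∫ s in (0:ℝ)..τ, f.eval s * r.eval s) = 0 := by
      have := aux_int f 0 τ τ k (by intro j hj; simp [hmom j hj]) r hdr
      simpa using this
    rw [hr] at hzero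
    exact absurd (aux_pos τ hτ r hzero) hrne
  haveI : FiniteDimensional ℝ V := Module.Finite.equiv (Polynomial.degreeLTEquiv ℝ (k + 1)).symm
  have hMsurj : Function.Surjective M := by
    have hfr : Module.finrank ℝ V = Module.finrank ℝ (Fin (k + 1) → ℝ) := by
      rw [(Polynomial.degreeLTEquiv ℝ (k + 1)).finrank_eq]
    exact (LinearMap.injective_iff_surjective_of_finrank_eq_finrank hfr).mp hMinj
  -- target vector
  set b : Fin (k + 1) → ℝ := fun i => if (i : ℕ) = 0 then p.eval 0
      else ∫ s in (0:ℝ)..t, p.eval s * s ^ ((i : ℕ) - 1) with hb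
  obtain ⟨⟨pt, hptmem⟩, hptb⟩ := hMsurj b
  have hptb' : ∀ i : Fin (k + 1), M ⟨pt, hptmem⟩ i = b i := fun i => by rw [hptb]
  have hpt0 : pt.eval 0 = p.eval 0 := by simpa [M, hb] using hptb' 0
  have hptmom : ∀ j, j < k →
      (∫ s in (0:ℝ)..τ, pt.eval s * s ^ j) = ∫ s in (0:ℝ)..t, p.eval s * s ^ j := by
    intro j hj
    have := hptb' ⟨j + 1, by omega⟩
    simpa [M, hb] using this
  refine ⟨pt, ⟨natDegree_le_of_mem_degreeLT hptmem, hpt0, ?_⟩, ?_⟩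
  · intro q hq
    exact aux_int pt p τ t k hptmom q (by omega)
  · -- uniqueness
    rintro y ⟨hy1, hy2, hy3⟩
    have hymem : y ∈ V := mem_degreeLT_of_natDegree_le hy1
    have : M ⟨y, hymem⟩ = b := by
      funext i
      by_cases hi : (i : ℕ) = 0
      · simp [M, hb, hi, hy2, (show i = 0 by simpa using hi)]
      · have hjk : (i : ℕ) - 1 ≤ k - 1 := by omega
        have := hy3 (Polynomial.X ^ ((i : ℕ) - 1))
          (by simpa [Polynomial.natDegree_X_pow] using hjk)
        simp only [Polynomial.eval_pow, Polynomial.eval_X] at this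
        simp [M, hb, hi, this, (show i ≠ 0 by simpa using hi)]
    have := hMinj (this.trans hptb.symm)
    exact Subtype.ext_iff.mp this
end

section
/- Let τ > 0, k ≥ 1. There exists a constant C_k depending only on k such that for every t ∈ [0, τ], the polynomial ρ of degree at most k determined by ρ(0) = 1 and ∫₀^τ ρ·q = ∫₀^t q for all polynomials q of degree at most k−1 satisfies sup_{s∈[0,τ]} |ρ(s)| ≤ C_k, uniformly in t and τ. -/
set_option maxHeartbeats 1000000


open MeasureTheory Polynomial

lemma aux_zero (p : Polynomial ℝ) (hnn : ∀ x ∈ Set.Ioc (0:ℝ) 1, 0 ≤ p.eval x)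
    (hint : (∫ x in (0:ℝ)..1, p.eval x) = 0) : p = 0 := by
  by_contra hp
  have hcont : Continuous fun x : ℝ => p.eval x := p.continuous
  have hae : (fun x : ℝ => p.eval x) =ᵐ[volume.restrict (Set.Ioc (0:ℝ) 1)] 0 := by
    refine (intervalIntegral.integral_eq_zero_iff_of_le_of_nonneg_ae zero_le_one ?_ ?_).mp hint
    · exact (ae_restrict_iff' measurableSet_Ioc).mpr (Filter.Eventually.of_forall hnn)
    · exact hcont.intervalIntegrable 0 1
  have hroots : ({x : ℝ | p.IsRoot x}).Finite := p.finite_setOf_isRoot hp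
  have hsub : Set.Ioc (0:ℝ) 1 ⊆ {x : ℝ | p.IsRoot x} ∪ {x | ¬ ((fun x : ℝ => p.eval x) x = (0:ℝ→ℝ) x)} := by
    intro x hx
    by_cases h : p.eval x = 0
    · exact Or.inl h
    · exact Or.inr (by simpa using h)
  have h0 : volume.restrict (Set.Ioc (0:ℝ) 1) {x | ¬ ((fun x : ℝ => p.eval x) x = (0:ℝ→ℝ) x)} = 0 := hae
  have h1 : (volume.restrict (Set.Ioc (0:ℝ) 1)) (Set.Ioc (0:ℝ) 1) ≤ 0 := by
    calc (volume.restrict (Set.Ioc (0:ℝ) 1)) (Set.Ioc (0:ℝ) 1)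
        ≤ (volume.restrict (Set.Ioc (0:ℝ) 1)) ({x : ℝ | p.IsRoot x}) +
          (volume.restrict (Set.Ioc (0:ℝ) 1)) {x | ¬ ((fun x : ℝ => p.eval x) x = (0:ℝ→ℝ) x)} :=
          le_trans (measure_mono hsub) (measure_union_le _ _)
      _ ≤ 0 + 0 := by
          refine add_le_add ?_ (le_of_eq h0)
          refine le_trans (Measure.restrict_le_self _) ?_
          exact le_of_eq (hroots.measure_zero _)
      _ = 0 := by simp
  rw [Measure.restrict_apply_self] at h1
  simp [Real.volume_Ioc] at h1

open MeasureTheory Polynomial intervalIntegral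

noncomputable def polyCore (n : ℕ) : InnerProductSpace.Core ℝ (Polynomial.degreeLT ℝ n) where
  inner p q := ∫ x in (0:ℝ)..1, (p:Polynomial ℝ).eval x * (q:Polynomial ℝ).eval x
  conj_inner_symm p q := by simp [mul_comm]
  re_inner_nonneg p := by
    simp only [RCLike.re_to_real]
    apply intervalIntegral.integral_nonneg zero_le_one
    intro x _; exact mul_self_nonneg _
  add_left p q r := by
    simp only [Submodule.coe_add, Polynomial.eval_add, add_mul]
    exact intervalIntegral.integral_add
      ((((p:Polynomial ℝ).continuous.mul (r:Polynomial ℝ).continuous)).intervalIntegrable 0 1)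
      ((((q:Polynomial ℝ).continuous.mul (r:Polynomial ℝ).continuous)).intervalIntegrable 0 1)
  smul_left p q c := by
    simp only [Submodule.coe_smul, Polynomial.eval_smul, smul_eq_mul, mul_assoc,
      RCLike.conj_to_real]
    rw [← intervalIntegral.integral_const_mul]
  definite p hp := by
    have h0 : ((p:Polynomial ℝ) * (p:Polynomial ℝ)) = 0 := by
      apply aux_zero
      · intro x _; simp [Polynomial.eval_mul]; exact mul_self_nonneg _
      · simpa [Polynomial.eval_mul] using hp
    have : (p : Polynomial ℝ) = 0 := by
      exact mul_self_eq_zero.mp h0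
    exact Subtype.ext this

noncomputable instance (n : ℕ) : NormedAddCommGroup (Polynomial.degreeLT ℝ n) :=
  (polyCore n).toNormedAddCommGroup

noncomputable instance (n : ℕ) : InnerProductSpace ℝ (Polynomial.degreeLT ℝ n) :=
  InnerProductSpace.ofCore (polyCore n).toCore

instance (n : ℕ) : FiniteDimensional ℝ (Polynomial.degreeLT ℝ n) :=
  Module.Finite.equiv (Polynomial.degreeLTEquiv ℝ n).symm

example (n : ℕ) (p q : Polynomial.degreeLT ℝ n) :
    @inner ℝ _ _ p q = ∫ x in (0:ℝ)..1, (p:Polynomial ℝ).eval x * (q:Polynomial ℝ).eval x := rfl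

example (n : ℕ) : Module.finrank ℝ (Polynomial.degreeLT ℝ n) = n := by
  rw [(Polynomial.degreeLTEquiv ℝ n).finrank_eq]; simp
open MeasureTheory Polynomial intervalIntegral

lemma inner_poly_def {n : ℕ} (p q : Polynomial.degreeLT ℝ n) :
    @inner ℝ _ _ p q = ∫ x in (0:ℝ)..1, (p:Polynomial ℝ).eval x * (q:Polynomial ℝ).eval x := rfl

lemma natDegree_le_of_mem_degreeLT_s9 {k : ℕ} (hk : 1 ≤ k) {q : Polynomial ℝ}
    (hq : q ∈ Polynomial.degreeLT ℝ k) : q.natDegree ≤ k - 1 := by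
  by_cases h : q = 0
  · simp [h]
  · have h2 := Polynomial.mem_degreeLT.mp hq
    have h3 : q.natDegree < k := (Polynomial.natDegree_lt_iff_degree_lt h).mpr h2
    omega

lemma normalized_bound (k : ℕ) (hk : 1 ≤ k) :
    ∃ Ck : ℝ, ∀ θ ∈ Set.Icc (0:ℝ) 1, ∀ σ : Polynomial ℝ,
      σ.natDegree ≤ k → σ.eval 0 = 1 →
      (∀ q : Polynomial ℝ, q.natDegree ≤ k - 1 →
        (∫ x in (0:ℝ)..1, σ.eval x * q.eval x) = ∫ x in (0:ℝ)..θ, q.eval x) →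
      ∀ s ∈ Set.Icc (0:ℝ) 1, |σ.eval s| ≤ Ck := by
  classical
  set E : Submodule ℝ (Polynomial ℝ) := Polynomial.degreeLT ℝ (k+1) with hEdef
  have hle : Polynomial.degreeLT ℝ k ≤ Polynomial.degreeLT ℝ (k+1) :=
    Polynomial.degreeLT_mono (Nat.le_succ k)
  set F : Submodule ℝ E := (Polynomial.degreeLT ℝ k).comap E.subtype with hFdef
  have hE : Module.finrank ℝ E = k + 1 := by
    rw [(Polynomial.degreeLTEquiv ℝ (k+1)).finrank_eq]; simp
  have hF : Module.finrank ℝ F = k := by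
    rw [(Submodule.comapSubtypeEquivOfLe hle).finrank_eq]
    rw [(Polynomial.degreeLTEquiv ℝ k).finrank_eq]; simp
  have hW : Module.finrank ℝ ↥Fᗮ = 1 := by
    have h := Submodule.finrank_add_finrank_orthogonal F
    rw [hE, hF] at h; omega
  haveI : Nontrivial ↥Fᗮ := Module.nontrivial_of_finrank_pos (R := ℝ) (by omega)
  obtain ⟨w₀, hw₀⟩ := exists_ne (0 : ↥Fᗮ)
  have hspan : ∀ w : ↥Fᗮ, ∃ c : ℝ, c • w₀ = w :=
    (finrank_eq_one_iff_of_nonzero' w₀ hw₀).mp hW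
  set v₀ : Polynomial ℝ := ((w₀ : ↥E) : Polynomial ℝ) with hv₀def
  have hv₀ne : v₀ ≠ 0 := by
    intro h
    exact hw₀ (Subtype.ext (Subtype.ext h))
  set ev0 : ↥E →L[ℝ] ℝ :=
    LinearMap.toContinuousLinearMap ((Polynomial.leval (0:ℝ)).comp E.subtype) with hev0def
  set φ : ℕ → (↥E →L[ℝ] ℝ) := (fun i =>
    LinearMap.toContinuousLinearMap ((Polynomial.lcoeff ℝ i).comp E.subtype)) with hφdef
  have hev0_apply : ∀ p : ↥E, ev0 p = (p : Polynomial ℝ).eval 0 := fun p => rfl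
  have hφ_apply : ∀ i (p : ↥E), φ i p = (p : Polynomial ℝ).coeff i := fun i p => rfl
  -- Claim A : v₀.eval 0 ≠ 0
  have hA : v₀.eval 0 ≠ 0 := by
    intro h0
    obtain ⟨p, hp⟩ : Polynomial.X ∣ v₀ :=
      Polynomial.X_dvd_iff.mpr (by rwa [Polynomial.coeff_zero_eq_eval_zero])
    have hpne : p ≠ 0 := by rintro rfl; rw [mul_zero] at hp; exact hv₀ne hp
    have hdeg : p ∈ Polynomial.degreeLT ℝ k := by
      rw [Polynomial.mem_degreeLT]
      have hdv : v₀.degree < ((k+1 : ℕ) : WithBot ℕ) := Polynomial.mem_degreeLT.mp (w₀ : ↥E).2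
      rw [hp, Polynomial.degree_mul, Polynomial.degree_X,
        Polynomial.degree_eq_natDegree hpne] at hdv
      have : (1 : ℕ) + p.natDegree < k + 1 := by exact_mod_cast hdv
      rw [Polynomial.degree_eq_natDegree hpne]
      exact_mod_cast (by omega : p.natDegree < k)
    have hpE : p ∈ E := hle hdeg
    have hpF : (⟨p, hpE⟩ : ↥E) ∈ F := hdeg
    have hinner : @inner ℝ _ _ (⟨p, hpE⟩ : ↥E) (w₀ : ↥E) = 0 :=
      (Submodule.mem_orthogonal F (w₀ : ↥E)).mp w₀.2 _ hpF
    rw [inner_poly_def] at hinner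
    have hzero : p * v₀ = 0 := by
      apply aux_zero
      · intro x hx
        rw [hp, Polynomial.eval_mul, Polynomial.eval_mul, Polynomial.eval_X]
        have he : Polynomial.eval x p * (x * Polynomial.eval x p)
            = x * (Polynomial.eval x p)^2 := by ring
        rw [he]
        exact mul_nonneg hx.1.le (sq_nonneg _)
      · simpa [Polynomial.eval_mul] using hinner
    rcases mul_eq_zero.mp hzero with h | h
    · exact hpne h
    · exact hv₀ne h
  -- the constant
  refine ⟨(∑ i ∈ Finset.range (k+1), ‖φ i‖) *
    (1 + (1 + ‖ev0‖) / |v₀.eval 0| * ‖(w₀ : ↥E)‖), ?_⟩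
  intro θ hθ σ hσdeg hσ0 hσint s hs
  have hσE : σ ∈ E := by
    rw [hEdef, Polynomial.mem_degreeLT]
    calc σ.degree ≤ (σ.natDegree : WithBot ℕ) := Polynomial.degree_le_natDegree
      _ < ((k+1 : ℕ) : WithBot ℕ) := by exact_mod_cast (by omega : σ.natDegree < k + 1)
  set σE : ↥E := ⟨σ, hσE⟩ with hσEdef
  set u : ↥F := F.orthogonalProjectionOnto σE with hudef
  set uE : ↥E := (u : ↥E) with huEdef
  set up : Polynomial ℝ := (uE : Polynomial ℝ) with hupdef
  have hupc : Continuous fun x : ℝ => up.eval x := up.continuous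
  -- constraint in inner-product form
  have hconstr : ∀ q : Polynomial ℝ, q ∈ Polynomial.degreeLT ℝ k → ∀ hqE : q ∈ E,
      @inner ℝ _ _ σE (⟨q, hqE⟩ : ↥E) = ∫ x in (0:ℝ)..θ, q.eval x := by
    intro q hq hqE
    rw [inner_poly_def]
    exact hσint q (natDegree_le_of_mem_degreeLT_s9 hk hq)
  -- ‖uE‖ ≤ 1
  have hinner_uu : @inner ℝ _ _ uE uE = ∫ x in (0:ℝ)..θ, up.eval x := by
    have h1 : @inner ℝ _ _ (σE - uE) uE = 0 :=
      Submodule.starProjection_inner_eq_zero (K := F) σE uE u.2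
    rw [inner_sub_left] at h1
    have h2 : @inner ℝ _ _ σE uE = @inner ℝ _ _ uE uE := by linarith [h1]
    rw [← h2]
    have := hconstr up u.2 uE.2
    simpa using this
  have hnormu : ‖uE‖ ≤ 1 := by
    have e1 : ‖uE‖^2 = ∫ x in (0:ℝ)..θ, up.eval x := by
      rw [← real_inner_self_eq_norm_sq]; exact hinner_uu
    have e2 : (∫ x in (0:ℝ)..θ, up.eval x)
        ≤ ∫ x in (0:ℝ)..θ, ((up.eval x)^2 + 1)/2 := by
      apply intervalIntegral.integral_mono_on hθ.1
        (hupc.intervalIntegrable 0 θ)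
        (((hupc.pow 2).add continuous_const).div_const 2 |>.intervalIntegrable 0 θ)
      intro x _; show up.eval x ≤ ((up.eval x)^2 + 1)/2; nlinarith [sq_nonneg (up.eval x - 1)]
    have e3 : (∫ x in (0:ℝ)..θ, ((up.eval x)^2 + 1)/2)
        ≤ ∫ x in (0:ℝ)..1, ((up.eval x)^2 + 1)/2 := by
      apply intervalIntegral.integral_mono_interval le_rfl hθ.1 hθ.2
      · filter_upwards with x
        positivity
      · exact (((hupc.pow 2).add continuous_const).div_const 2).intervalIntegrable 0 1
    have e4 : (∫ x in (0:ℝ)..1, ((up.eval x)^2 + 1)/2) = (‖uE‖^2 + 1)/2 := by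
      have einn : ‖uE‖^2 = ∫ x in (0:ℝ)..1, up.eval x * up.eval x := by
        rw [← real_inner_self_eq_norm_sq]; rfl
      rw [intervalIntegral.integral_div]
      rw [intervalIntegral.integral_add (f := fun x => up.eval x ^ 2) (g := fun _ => (1:ℝ))
        ((hupc.pow 2).intervalIntegrable 0 1)
        (intervalIntegrable_const)]
      simp only [intervalIntegral.integral_const, smul_eq_mul, sub_zero, one_mul]
      rw [einn]
      congr 1
      congr 1
      apply intervalIntegral.integral_congr
      intro x _; ring
    nlinarith [norm_nonneg uE]
  -- decomposition
  have hwmem : σE - uE ∈ Fᗮ := Submodule.sub_starProjection_mem_orthogonal (K := F) σE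
  obtain ⟨c, hc⟩ := hspan ⟨σE - uE, hwmem⟩
  have hcE : c • ((w₀ : ↥Fᗮ) : ↥E) = σE - uE := by
    have := congrArg (fun x : ↥Fᗮ => (x : ↥E)) hc
    simpa using this
  have hev0σ : ev0 σE = 1 := by rw [hev0_apply]; exact hσ0
  have hev0w : c * v₀.eval 0 = 1 - ev0 uE := by
    have h := congrArg ev0 hcE
    rw [_root_.map_smul, map_sub, hev0σ] at h
    rw [hev0_apply ((w₀ : ↥Fᗮ) : ↥E)] at h
    simpa [smul_eq_mul] using h
  have hev0u : |ev0 uE| ≤ ‖ev0‖ := by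
    calc |ev0 uE| ≤ ‖ev0‖ * ‖uE‖ := ev0.le_opNorm uE
      _ ≤ ‖ev0‖ * 1 := by
          exact mul_le_mul_of_nonneg_left hnormu (by positivity)
      _ = ‖ev0‖ := mul_one _
  have hcb : |c| ≤ (1 + ‖ev0‖) / |v₀.eval 0| := by
    rw [le_div_iff₀ (abs_pos.mpr hA)]
    calc |c| * |v₀.eval 0| = |c * v₀.eval 0| := (abs_mul c _).symm
      _ = |1 - ev0 uE| := by rw [hev0w]
      _ ≤ |(1:ℝ)| + |ev0 uE| := abs_sub _ _
      _ ≤ 1 + ‖ev0‖ := by rw [abs_one]; linarith [hev0u]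
  have hσnorm : ‖σE‖ ≤ 1 + (1 + ‖ev0‖) / |v₀.eval 0| * ‖(w₀ : ↥E)‖ := by
    have hdec : σE = uE + c • ((w₀ : ↥Fᗮ) : ↥E) := by rw [hcE]; abel
    calc ‖σE‖ = ‖uE + c • ((w₀ : ↥Fᗮ) : ↥E)‖ := by rw [← hdec]
      _ ≤ ‖uE‖ + ‖c • ((w₀ : ↥Fᗮ) : ↥E)‖ := norm_add_le _ _
      _ = ‖uE‖ + |c| * ‖(w₀ : ↥E)‖ := by rw [norm_smul, Real.norm_eq_abs]
      _ ≤ 1 + (1 + ‖ev0‖) / |v₀.eval 0| * ‖(w₀ : ↥E)‖ := by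
          refine add_le_add hnormu (mul_le_mul_of_nonneg_right hcb (norm_nonneg _))
  -- final bound
  have heval : σ.eval s = ∑ i ∈ Finset.range (k+1), σ.coeff i * s^i :=
    Polynomial.eval_eq_sum_range' (by omega) s
  have habs_s : |s| ≤ 1 := abs_le.mpr ⟨by linarith [hs.1], hs.2⟩
  calc |σ.eval s| = |∑ i ∈ Finset.range (k+1), σ.coeff i * s^i| := by rw [heval]
    _ ≤ ∑ i ∈ Finset.range (k+1), |σ.coeff i * s^i| := Finset.abs_sum_le_sum_abs _ _
    _ ≤ ∑ i ∈ Finset.range (k+1), ‖φ i‖ * (1 + (1 + ‖ev0‖) / |v₀.eval 0| * ‖(w₀ : ↥E)‖) := by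
        apply Finset.sum_le_sum
        intro i _
        have h1 : |σ.coeff i * s^i| ≤ |σ.coeff i| := by
          rw [abs_mul]
          have : |s^i| ≤ 1 := by
            rw [abs_pow]; exact pow_le_one₀ (abs_nonneg s) habs_s
          exact mul_le_of_le_one_right (abs_nonneg _) this
        have h2 : |σ.coeff i| ≤ ‖φ i‖ * ‖σE‖ := by
          have := (φ i).le_opNorm σE
          rwa [hφ_apply] at this
        have h3 : ‖φ i‖ * ‖σE‖ ≤ ‖φ i‖ * (1 + (1 + ‖ev0‖) / |v₀.eval 0| * ‖(w₀ : ↥E)‖) :=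
          mul_le_mul_of_nonneg_left hσnorm (by positivity)
        linarith
    _ = (∑ i ∈ Finset.range (k+1), ‖φ i‖) *
        (1 + (1 + ‖ev0‖) / |v₀.eval 0| * ‖(w₀ : ↥E)‖) := by
        rw [Finset.sum_mul]
/-- Uniform boundedness (in `t` and `τ`) of the discrete characteristic polynomial. -/
theorem stmt_9 (k : ℕ) (hk : 1 ≤ k) :
    ∃ Ck : ℝ, ∀ τ : ℝ, 0 < τ → ∀ t ∈ Set.Icc (0:ℝ) τ, ∀ ρ : Polynomial ℝ,
      ρ.natDegree ≤ k → ρ.eval 0 = 1 →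
      (∀ q : Polynomial ℝ, q.natDegree ≤ k - 1 →
        ∫ s in (0:ℝ)..τ, ρ.eval s * q.eval s = ∫ s in (0:ℝ)..t, q.eval s) →
      ∀ s ∈ Set.Icc (0:ℝ) τ, |ρ.eval s| ≤ Ck := by
  obtain ⟨Ck, hCk⟩ := normalized_bound k hk
  refine ⟨Ck, ?_⟩
  intro τ hτ t ht ρ hρdeg hρ0 hρint s hs
  have hτne : τ ≠ 0 := ne_of_gt hτ
  set σ : Polynomial ℝ := ρ.comp (Polynomial.C τ * Polynomial.X) with hσdef
  have hσeval : ∀ x : ℝ, σ.eval x = ρ.eval (τ * x) := by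
    intro x; simp [hσdef, Polynomial.eval_comp]
  have hσdeg : σ.natDegree ≤ k := by
    rw [hσdef, Polynomial.natDegree_comp]
    have h1 : (Polynomial.C τ * Polynomial.X).natDegree = 1 := by
      simpa using Polynomial.natDegree_C_mul_X τ hτne
    rw [h1, mul_one]; exact hρdeg
  have hσ0 : σ.eval 0 = 1 := by rw [hσeval]; simpa using hρ0
  have hσint : ∀ q : Polynomial ℝ, q.natDegree ≤ k - 1 →
      (∫ x in (0:ℝ)..1, σ.eval x * q.eval x) = ∫ x in (0:ℝ)..(t/τ), q.eval x := by
    intro q hq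
    set q' : Polynomial ℝ := q.comp (Polynomial.C τ⁻¹ * Polynomial.X) with hq'def
    have hq'eval : ∀ y : ℝ, q'.eval y = q.eval (τ⁻¹ * y) := by
      intro y; simp [hq'def, Polynomial.eval_comp]
    have hq'deg : q'.natDegree ≤ k - 1 := by
      rw [hq'def, Polynomial.natDegree_comp]
      have h1 : (Polynomial.C τ⁻¹ * Polynomial.X).natDegree = 1 := by
        simpa using Polynomial.natDegree_C_mul_X τ⁻¹ (inv_ne_zero hτne)
      rw [h1, mul_one]; exact hq
    have h1 := hρint q' hq'deg
    have key1 : (∫ x in (0:ℝ)..1, σ.eval x * q.eval x)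
        = τ⁻¹ • ∫ y in (0:ℝ)..τ, ρ.eval y * q'.eval y := by
      have h2 := intervalIntegral.integral_comp_mul_left
        (f := fun y => ρ.eval y * q'.eval y) (a := (0:ℝ)) (b := 1) hτne
      rw [mul_zero, mul_one] at h2
      rw [← h2]
      apply intervalIntegral.integral_congr
      intro x _
      simp only [hσeval, hq'eval]
      rw [← mul_assoc, inv_mul_cancel₀ hτne, one_mul]
    have key2 : (∫ x in (0:ℝ)..(t/τ), q.eval x)
        = τ⁻¹ • ∫ y in (0:ℝ)..t, q'.eval y := by
      have h2 := intervalIntegral.integral_comp_mul_left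
        (f := fun y => q'.eval y) (a := (0:ℝ)) (b := t/τ) hτne
      rw [mul_zero, mul_div_cancel₀ _ hτne] at h2
      rw [← h2]
      apply intervalIntegral.integral_congr
      intro x _
      simp only [hq'eval]
      rw [← mul_assoc, inv_mul_cancel₀ hτne, one_mul]
    rw [key1, key2, h1]
  have hθ : t/τ ∈ Set.Icc (0:ℝ) 1 :=
    ⟨div_nonneg ht.1 hτ.le, (div_le_one hτ).mpr ht.2⟩
  have hsθ : s/τ ∈ Set.Icc (0:ℝ) 1 :=
    ⟨div_nonneg hs.1 hτ.le, (div_le_one hτ).mpr hs.2⟩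
  have := hCk (t/τ) hθ σ hσdeg hσ0 hσint (s/τ) hsθ
  rwa [hσeval, mul_div_cancel₀ _ hτne] at this
end
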